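/- arXiv:0804.3943 — 2 statements merged into one kernel-verified Lean document; each statement's English description precedes it below -/
import Mathlib

section
/- Assume H is strictly convex (d_k > 0 for some finite k ≥ 2) and H'(μ¹) > 1, and let μ² = min{x ∈ [0,1] : H(x) − x = 1 − 2μ¹} (so μ² < μ¹). Then for every starting value x_0 ∈ [0, μ¹), the sequence defined by x_{k+1} = 1 − 2H(μ¹) + H(x_k) = 2μ¹ − 1 + H(x_k) converges to μ² as k → ∞. -/
open MeasureTheory ProbabilityTheory Filter Topology

/-- The generating function `H(x) = ∑_{k≥1} d_k x^k` (we use `d : ℕ → ℝ` with `d 0 = 0`). -/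
noncomputable def genFun (d : ℕ → ℝ) (x : ℝ) : ℝ := ∑' k, d k * x ^ k

/-- The derivative `H'(x) = ∑_{k≥1} k d_k x^(k-1)`. -/
noncomputable def genFunDeriv (d : ℕ → ℝ) (x : ℝ) : ℝ :=
  ∑' k : ℕ, ((k : ℝ) + 1) * d (k + 1) * x ^ k

lemma genFun_summable {d : ℕ → ℝ} (hdnn : ∀ k, 0 ≤ d k) (hdsum : Summable d)
    {x : ℝ} (hx0 : 0 ≤ x) (hx1 : x ≤ 1) : Summable (fun k => d k * x ^ k) := by
  refine hdsum.of_nonneg_of_le (fun k => mul_nonneg (hdnn k) (pow_nonneg hx0 k)) (fun k => ?_)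
  calc d k * x ^ k ≤ d k * 1 := by
        exact mul_le_mul_of_nonneg_left (pow_le_one₀ hx0 hx1) (hdnn k)
    _ = d k := mul_one _

lemma genFun_zero {d : ℕ → ℝ} (hd0 : d 0 = 0) : genFun d 0 = 0 := by
  unfold genFun
  convert tsum_zero with k
  cases k with
  | zero => simp [hd0]
  | succ n => simp

lemma genFun_one {d : ℕ → ℝ} : genFun d 1 = ∑' k, d k := by
  unfold genFun; simp

lemma genFun_monotoneOn {d : ℕ → ℝ} (hdnn : ∀ k, 0 ≤ d k) (hdsum : Summable d) :
    MonotoneOn (genFun d) (Set.Icc 0 1) := by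
  intro a ha b hb hab
  refine Summable.tsum_le_tsum (fun k => ?_) (genFun_summable hdnn hdsum ha.1 ha.2)
    (genFun_summable hdnn hdsum hb.1 hb.2)
  exact mul_le_mul_of_nonneg_left (pow_le_pow_left₀ ha.1 hab k) (hdnn k)

lemma genFun_continuousOn {d : ℕ → ℝ} (hdnn : ∀ k, 0 ≤ d k) (hdsum : Summable d) :
    ContinuousOn (genFun d) (Set.Icc 0 1) := by
  refine continuousOn_tsum (fun k => (continuous_pow k).continuousOn.const_smul (d k)) hdsum
    (fun k x hx => ?_)
  have : |d k * x ^ k| = d k * |x| ^ k := by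
    rw [abs_mul, abs_of_nonneg (hdnn k), abs_pow]
  rw [Real.norm_eq_abs, this]
  calc d k * |x| ^ k ≤ d k * 1 := by
        refine mul_le_mul_of_nonneg_left (pow_le_one₀ (abs_nonneg _) ?_) (hdnn k)
        rw [abs_le]; exact ⟨le_trans (by norm_num) hx.1, hx.2⟩
    _ = d k := mul_one _

lemma genFun_convexOn {d : ℕ → ℝ} (hdnn : ∀ k, 0 ≤ d k) (hdsum : Summable d) :
    ConvexOn ℝ (Set.Icc 0 1) (genFun d) := by
  refine ⟨convex_Icc 0 1, fun x hx y hy a b ha hb hab => ?_⟩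
  have hsx := genFun_summable hdnn hdsum hx.1 hx.2
  have hsy := genFun_summable hdnn hdsum hy.1 hy.2
  have hmem : a • x + b • y ∈ Set.Icc (0:ℝ) 1 := (convex_Icc 0 1) hx hy ha hb hab
  have hs := genFun_summable hdnn hdsum hmem.1 hmem.2
  have key : ∀ k, d k * (a • x + b • y) ^ k ≤ a * (d k * x ^ k) + b * (d k * y ^ k) := by
    intro k
    have h := (convexOn_pow k).2 (Set.mem_Ici.2 hx.1) (Set.mem_Ici.2 hy.1) ha hb hab
    simp only [smul_eq_mul] at h ⊢
    nlinarith [hdnn k, h]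
  have hsum2 : Summable (fun k => a * (d k * x ^ k) + b * (d k * y ^ k)) :=
    (hsx.mul_left a).add (hsy.mul_left b)
  calc genFun d (a • x + b • y) ≤ ∑' k, (a * (d k * x ^ k) + b * (d k * y ^ k)) :=
        Summable.tsum_le_tsum key hs hsum2
    _ = a • genFun d x + b • genFun d y := by
        rw [Summable.tsum_add (hsx.mul_left a) (hsy.mul_left b), tsum_mul_left, tsum_mul_left]
        simp [genFun, smul_eq_mul]

lemma genFun_strictConvexOn {d : ℕ → ℝ} (hd0 : d 0 = 0) (hdnn : ∀ k, 0 ≤ d k)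
    (hdsum : Summable d) (hconv : ∃ k : ℕ, 2 ≤ k ∧ 0 < d k) :
    StrictConvexOn ℝ (Set.Icc 0 1) (genFun d) := by
  obtain ⟨k0, hk0, hdk0⟩ := hconv
  set e : ℕ → ℝ := fun k => if k = k0 then 0 else d k with he
  have hennn : ∀ k, 0 ≤ e k := fun k => by
    simp only [he]; split <;> [exact le_refl 0; exact hdnn k]
  have hesum : Summable e :=
    hdsum.of_nonneg_of_le hennn (fun k => by simp only [he]; split <;> [exact hdnn k; exact le_refl _])
  have hdecomp : ∀ x : ℝ, 0 ≤ x → x ≤ 1 → genFun d x = d k0 * x ^ k0 + genFun e x := by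
    intro x hx0 hx1
    have hs := genFun_summable hdnn hdsum hx0 hx1
    rw [genFun, Summable.tsum_eq_add_tsum_ite hs k0]
    congr 1
    unfold genFun
    apply tsum_congr
    intro k
    by_cases h : k = k0 <;> simp [he, h]
  refine ⟨convex_Icc 0 1, fun x hx y hy hxy a b ha hb hab => ?_⟩
  have hmem : a • x + b • y ∈ Set.Icc (0:ℝ) 1 := (convex_Icc 0 1) hx hy ha.le hb.le hab
  have h1 : d k0 * (a • x + b • y) ^ k0 < a * (d k0 * x ^ k0) + b * (d k0 * y ^ k0) := by
    have h := (strictConvexOn_pow hk0).2 (Set.mem_Ici.2 hx.1) (Set.mem_Ici.2 hy.1) hxy ha hb hab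
    simp only [smul_eq_mul] at h ⊢
    nlinarith [h, hdk0]
  have h2 : genFun e (a • x + b • y) ≤ a * genFun e x + b * genFun e y := by
    have := (genFun_convexOn hennn hesum).2 hx hy ha.le hb.le hab
    simpa [smul_eq_mul] using this
  rw [hdecomp _ hmem.1 hmem.2, hdecomp _ hx.1 hx.2, hdecomp _ hy.1 hy.2]
  simp only [smul_eq_mul] at h1 h2 ⊢
  nlinarith [h1, h2]

/-- in the unstable case `H'(μ¹) > 1`, with `μ²` the lesser root in `[0,1]` of
`H(x) - x = 1 - 2μ¹` (so `μ² < μ¹`), the recursion `x_{k+1} = 1 - 2H(μ¹) + H(x_k)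
= 2μ¹ - 1 + H(x_k)` converges to `μ²` from every starting point `x₀ ∈ [0, μ¹)`. -/
theorem second_moment_recursion_converges (d : ℕ → ℝ) (hd0 : d 0 = 0) (hdnn : ∀ k, 0 ≤ d k)
    (hdsum : Summable d) (hdle : ∑' k, d k ≤ 1)
    (hconv : ∃ k : ℕ, 2 ≤ k ∧ 0 < d k)
    (μ1 : ℝ) (hμ1 : μ1 ∈ Set.Ioo (0 : ℝ) 1) (hroot : genFun d μ1 + μ1 = 1)
    (hunstable : 1 < genFunDeriv d μ1)
    (μ2 : ℝ) (hμ2 : IsLeast {x ∈ Set.Icc (0 : ℝ) 1 | genFun d x - x = 1 - 2 * μ1} μ2) :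
    μ2 < μ1 ∧
    ∀ x : ℕ → ℝ, x 0 ∈ Set.Ico (0 : ℝ) μ1 →
      (∀ k, x (k + 1) = 2 * μ1 - 1 + genFun d (x k)) →
      Tendsto x atTop (nhds μ2) := by
  obtain ⟨hμ1_0, hμ1_1⟩ := hμ1
  obtain ⟨⟨⟨hμ2_0, hμ2_1⟩, hμ2eq⟩, hμ2least⟩ := hμ2
  have hIcc : μ1 ∈ Set.Icc (0:ℝ) 1 := ⟨hμ1_0.le, hμ1_1.le⟩
  have hμ2Icc : μ2 ∈ Set.Icc (0:ℝ) 1 := ⟨hμ2_0, hμ2_1⟩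
  have hmono := genFun_monotoneOn hdnn hdsum
  have hcont := genFun_continuousOn hdnn hdsum
  have hsc := genFun_strictConvexOn hd0 hdnn hdsum hconv
  have hH1le : genFun d 1 ≤ 1 := by rw [genFun_one]; exact hdle
  have hHμ1 : genFun d μ1 = 1 - μ1 := by linarith
  -- μ1 > 1/2
  have hhalf : 1/2 < μ1 := by
    have h := hsc.2 (Set.left_mem_Icc.2 zero_le_one) (Set.right_mem_Icc.2 zero_le_one)
      (zero_ne_one) (show (0:ℝ) < 1 - μ1 by linarith) hμ1_0 (by ring)
    simp only [smul_eq_mul, mul_zero, mul_one, zero_add, genFun_zero hd0] at h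
    nlinarith
  -- slope lemma: find x2 ∈ [0, μ1) with 2μ1-1+genFun(x2) < x2
  have hx2 : ∃ x2, 0 ≤ x2 ∧ x2 < μ1 ∧ 2*μ1 - 1 + genFun d x2 < x2 := by
    have hDnn : ∀ k : ℕ, 0 ≤ ((k:ℝ)+1) * d (k+1) * μ1 ^ k := fun k =>
      mul_nonneg (mul_nonneg (by positivity) (hdnn _)) (pow_nonneg hμ1_0.le k)
    have hDsum : Summable (fun k : ℕ => ((k:ℝ)+1) * d (k+1) * μ1 ^ k) := by
      by_contra h
      rw [genFunDeriv, tsum_eq_zero_of_not_summable h] at hunstable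
      linarith
    obtain ⟨N, hN⟩ : ∃ N, 1 < ∑ k ∈ Finset.range N, ((k:ℝ)+1) * d (k+1) * μ1 ^ k := by
      have ht := hDsum.hasSum.tendsto_sum_nat
      rw [show (∑' k : ℕ, ((k:ℝ)+1) * d (k+1) * μ1 ^ k) = genFunDeriv d μ1 from rfl] at ht
      exact (ht.eventually (eventually_gt_nhds hunstable)).exists
    set Q : ℝ → ℝ := fun x =>
      ∑ k ∈ Finset.range N, d (k+1) * ∑ i ∈ Finset.range (k+1), μ1 ^ i * x ^ (k - i) with hQ
    have hQcont : Continuous Q := by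
      apply continuous_finset_sum
      intro k _
      exact continuous_const.mul (continuous_finset_sum _ (fun i _ =>
        continuous_const.mul (continuous_pow _)))
    have hQμ1 : 1 < Q μ1 := by
      have : Q μ1 = ∑ k ∈ Finset.range N, ((k:ℝ)+1) * d (k+1) * μ1 ^ k := by
        refine Finset.sum_congr rfl (fun k _ => ?_)
        have hin : ∑ i ∈ Finset.range (k+1), μ1 ^ i * μ1 ^ (k - i) = ((k:ℝ)+1) * μ1 ^ k := by
          rw [Finset.sum_congr rfl (fun i hi => by
            rw [← pow_add, Nat.add_sub_cancel' (Nat.lt_succ_iff.1 (Finset.mem_range.1 hi))])]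
          simp [Finset.sum_const, Finset.card_range]
        rw [hin]; ring
      rw [this]; exact hN
    have hev1 : ∀ᶠ t in 𝓝[<] μ1, 1 < Q t :=
      ((hQcont.tendsto μ1).eventually (eventually_gt_nhds hQμ1)).filter_mono nhdsWithin_le_nhds
    have hev2 : ∀ᶠ t in 𝓝[<] μ1, 0 < t :=
      (eventually_gt_nhds hμ1_0).filter_mono nhdsWithin_le_nhds
    have hev3 : ∀ᶠ t in 𝓝[<] μ1, t < μ1 :=
      eventually_mem_nhdsWithin
    obtain ⟨t, ⟨h1Q, ht0⟩, htμ1⟩ := ((hev1.and hev2).and hev3).exists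
    refine ⟨t, ht0.le, htμ1, ?_⟩
    have hsumμ1 := genFun_summable hdnn hdsum hμ1_0.le hμ1_1.le
    have hsumt := genFun_summable hdnn hdsum ht0.le (le_trans htμ1.le hμ1_1.le)
    have hFQ : Q t * (μ1 - t) = ∑ k ∈ Finset.range N, d (k+1) * (μ1 ^ (k+1) - t ^ (k+1)) := by
      rw [hQ, Finset.sum_mul]
      refine Finset.sum_congr rfl (fun k _ => ?_)
      rw [mul_assoc]
      congr 1
      have h := geom_sum₂_mul μ1 t (k+1)
      simpa using h
    have hshift : ∑ k ∈ Finset.range (N+1), d k * (μ1 ^ k - t ^ k)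
        = ∑ k ∈ Finset.range N, d (k+1) * (μ1 ^ (k+1) - t ^ (k+1)) := by
      rw [Finset.sum_range_succ']
      simp [hd0]
    have hHdiff : ∑ k ∈ Finset.range (N+1), d k * (μ1 ^ k - t ^ k)
        ≤ genFun d μ1 - genFun d t := by
      have hsub : Summable (fun k => d k * μ1 ^ k - d k * t ^ k) := hsumμ1.sub hsumt
      have he : (fun k => d k * (μ1 ^ k - t ^ k)) = fun k => d k * μ1 ^ k - d k * t ^ k := by
        funext k; ring
      rw [genFun, genFun, ← Summable.tsum_sub hsumμ1 hsumt]
      refine he ▸ Summable.sum_le_tsum _ (fun k _ => ?_) (he ▸ hsub)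
      have : t ^ k ≤ μ1 ^ k := pow_le_pow_left₀ ht0.le htμ1.le k
      have := hdnn k
      nlinarith
    have hkey : μ1 - t < genFun d μ1 - genFun d t := by
      have hpos : 0 < μ1 - t := by linarith
      nlinarith [hFQ, hHdiff, hshift, h1Q]
    linarith [hHμ1, hkey]
  obtain ⟨x2, hx2_0, hx2_lt, hx2_neg⟩ := hx2
  -- continuity of ψ x = genFun d x - x
  have hψcont : ContinuousOn (fun x => genFun d x - x) (Set.Icc (0:ℝ) 1) :=
    hcont.sub continuousOn_id
  -- μ2 < μ1 via IVT on [0, x2]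
  have hμ2lt : μ2 < μ1 := by
    have hsub : Set.Icc (0:ℝ) x2 ⊆ Set.Icc 0 1 :=
      Set.Icc_subset_Icc le_rfl (le_trans hx2_lt.le hμ1_1.le)
    have hmemIcc : (1 - 2*μ1) ∈ Set.Icc (genFun d x2 - x2) (genFun d 0 - 0) := by
      rw [genFun_zero hd0]
      constructor <;> [linarith; linarith]
    obtain ⟨r, hr, hrψ⟩ := intermediate_value_Icc' hx2_0 (hψcont.mono hsub) hmemIcc
    have : μ2 ≤ r := hμ2least ⟨hsub hr, hrψ⟩
    linarith [hr.2]
  -- φ ≥ 0 on [0, μ2]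
  have hφnonneg : ∀ t, 0 ≤ t → t ≤ μ2 → t ≤ 2*μ1 - 1 + genFun d t := by
    intro t ht0 htμ2
    by_contra h
    push_neg at h
    have hsub : Set.Icc (0:ℝ) t ⊆ Set.Icc 0 1 :=
      Set.Icc_subset_Icc le_rfl (le_trans htμ2 hμ2_1)
    have hmemIcc : (1 - 2*μ1) ∈ Set.Icc (genFun d t - t) (genFun d 0 - 0) := by
      rw [genFun_zero hd0]
      constructor <;> [linarith; linarith]
    obtain ⟨r, hr, hrψ⟩ := intermediate_value_Icc' ht0 (hψcont.mono hsub) hmemIcc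
    have h1 : μ2 ≤ r := hμ2least ⟨hsub hr, hrψ⟩
    have h2 : r = μ2 := le_antisymm (le_trans hr.2 htμ2) h1
    have h3 : t = μ2 := le_antisymm htμ2 (h2 ▸ hr.2)
    rw [h3] at h
    simp only at hrψ
    rw [h2] at hrψ
    linarith [hμ2eq]
  -- φ < 0 on (μ2, μ1)
  have hφneg : ∀ t, μ2 < t → t < μ1 → 2*μ1 - 1 + genFun d t < t := by
    intro t h1 h2
    have hd : (0:ℝ) < μ1 - μ2 := by linarith
    set a : ℝ := (μ1 - t)/(μ1 - μ2) with ha_def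
    set b : ℝ := (t - μ2)/(μ1 - μ2) with hb_def
    have ha : 0 < a := div_pos (by linarith) hd
    have hb : 0 < b := div_pos (by linarith) hd
    have hab : a + b = 1 := by rw [ha_def, hb_def]; field_simp; ring
    have hat : a * μ2 + b * μ1 = t := by rw [ha_def, hb_def]; field_simp; ring
    have h := hsc.2 hμ2Icc hIcc (ne_of_lt hμ2lt) ha hb hab
    simp only [smul_eq_mul] at h
    rw [hat] at h
    have hkey : a * (genFun d μ2) + b * (genFun d μ1) + 2*μ1 - 1 = t := by
      rw [hHμ1, show genFun d μ2 = 1 - 2*μ1 + μ2 by linarith]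
      linear_combination hat + (1 - 2*μ1) * hab
    linarith
  refine ⟨hμ2lt, ?_⟩
  intro x hx0 hrec
  -- fixed-point extraction
  have hfixpt : ∀ L : ℝ, L ∈ Set.Icc (0:ℝ) 1 → (∀ k, x k ∈ Set.Icc (0:ℝ) 1) →
      Tendsto x atTop (𝓝 L) → genFun d L - L = 1 - 2*μ1 := by
    intro L hLmem hxmem hlim
    have h1 : Tendsto (fun k => x (k+1)) atTop (𝓝 L) := hlim.comp (tendsto_add_atTop_nat 1)
    have htin : Tendsto x atTop (𝓝[Set.Icc (0:ℝ) 1] L) :=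
      tendsto_nhdsWithin_of_tendsto_nhds_of_eventually_within _ hlim (Eventually.of_forall hxmem)
    have h2 : Tendsto (fun k => 2*μ1 - 1 + genFun d (x k)) atTop
        (𝓝 (2*μ1 - 1 + genFun d L)) :=
      tendsto_const_nhds.add ((hcont L hLmem).tendsto.comp htin)
    have h3 := tendsto_nhds_unique h1 (h2.congr (fun k => (hrec k).symm))
    linarith
  rcases le_or_gt (x 0) μ2 with hcase | hcase
  · -- increasing case
    have hinv : ∀ k, 0 ≤ x k ∧ x k ≤ μ2 ∧ x k ≤ x (k+1) := by
      intro k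
      induction k with
      | zero =>
        refine ⟨hx0.1, hcase, ?_⟩
        rw [hrec 0]
        linarith [hφnonneg (x 0) hx0.1 hcase]
      | succ n ih =>
        obtain ⟨h0, h2, h3⟩ := ih
        have hxn1_le : x (n+1) ≤ μ2 := by
          rw [hrec n]
          have := hmono ⟨h0, le_trans h2 hμ2_1⟩ hμ2Icc h2
          linarith
        have h0' : 0 ≤ x (n+1) := le_trans h0 h3
        refine ⟨h0', hxn1_le, ?_⟩
        rw [hrec (n+1)]
        linarith [hφnonneg (x (n+1)) h0' hxn1_le]
    have hmonox : Monotone x := monotone_nat_of_le_succ (fun k => (hinv k).2.2)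
    have hbdd : BddAbove (Set.range x) := ⟨μ2, by rintro _ ⟨k, rfl⟩; exact (hinv k).2.1⟩
    have hlim := tendsto_atTop_ciSup hmonox hbdd
    set L := ⨆ k, x k with hL
    have hLle : L ≤ μ2 := ciSup_le (fun k => (hinv k).2.1)
    have hL0 : 0 ≤ L := le_trans (hinv 0).1 (le_ciSup hbdd 0)
    have hxmem : ∀ k, x k ∈ Set.Icc (0:ℝ) 1 :=
      fun k => ⟨(hinv k).1, le_trans (hinv k).2.1 hμ2_1⟩
    have hfix := hfixpt L ⟨hL0, le_trans hLle hμ2_1⟩ hxmem hlim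
    have hge : μ2 ≤ L := hμ2least ⟨⟨hL0, le_trans hLle hμ2_1⟩, hfix⟩
    have : L = μ2 := le_antisymm hLle hge
    rwa [← this]
  · -- decreasing case
    have hinv : ∀ k, μ2 ≤ x k ∧ x k < μ1 ∧ x (k+1) ≤ x k := by
      intro k
      induction k with
      | zero =>
        refine ⟨hcase.le, hx0.2, ?_⟩
        rw [hrec 0]
        linarith [hφneg (x 0) hcase hx0.2]
      | succ n ih =>
        obtain ⟨h1, h2, h3⟩ := ih
        have hge : μ2 ≤ x (n+1) := by
          rw [hrec n]
          have := hmono hμ2Icc ⟨le_trans hμ2_0 h1, le_of_lt (lt_trans h2 hμ1_1)⟩ h1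
          linarith
        have hlt : x (n+1) < μ1 := lt_of_le_of_lt h3 h2
        refine ⟨hge, hlt, ?_⟩
        rcases eq_or_lt_of_le hge with heq | hlt2
        · rw [hrec (n+1), ← heq]
          linarith
        · rw [hrec (n+1)]
          linarith [hφneg (x (n+1)) hlt2 hlt]
    have hantix : Antitone x := antitone_nat_of_succ_le (fun k => (hinv k).2.2)
    have hbdd : BddBelow (Set.range x) := ⟨μ2, by rintro _ ⟨k, rfl⟩; exact (hinv k).1⟩
    have hlim := tendsto_atTop_ciInf hantix hbdd
    set L := ⨅ k, x k with hL
    have hLge : μ2 ≤ L := le_ciInf (fun k => (hinv k).1)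
    have hLlt : L < μ1 := lt_of_le_of_lt (ciInf_le hbdd 0) (hinv 0).2.1
    have hxmem : ∀ k, x k ∈ Set.Icc (0:ℝ) 1 := fun k =>
      ⟨le_trans hμ2_0 (hinv k).1, le_of_lt (lt_trans (hinv k).2.1 hμ1_1)⟩
    have hfix := hfixpt L ⟨le_trans hμ2_0 hLge, le_of_lt (lt_trans hLlt hμ1_1)⟩ hxmem hlim
    have : L = μ2 := by
      rcases eq_or_lt_of_le hLge with heq | hlt2
      · exact heq.symm
      · exfalso
        have := hφneg L hlt2 hLlt
        linarith
    rwa [← this]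
end

section
/- Assume H is strictly convex (d_k > 0 for some finite k ≥ 2) and H'(μ¹) ≤ 1, and let μ* be the unique minimizer of x ↦ H(x) − x on [0,1]. For ε > 0 with μ¹ + ε ≤ 1 define f_ε(x) = 1 − 2H(μ¹ + ε) + H(x). Then there exists ε₀ > 0 such that for every ε ∈ (0, ε₀): f_ε has exactly one fixed point in [0, μ*), denoted μ¹(ε); moreover μ¹(ε) → μ¹ as ε → 0⁺. -/
open MeasureTheory ProbabilityTheory Filter Topology

section helpers

variable (d : ℕ → ℝ)

lemma gf_summable (hdnn : ∀ k, 0 ≤ d k) (hdsum : Summable d) {x : ℝ}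
    (hx0 : 0 ≤ x) (hx1 : x ≤ 1) : Summable (fun k => d k * x ^ k) := by
  refine Summable.of_nonneg_of_le (fun k => mul_nonneg (hdnn k) (pow_nonneg hx0 k)) ?_ hdsum
  intro k
  calc d k * x ^ k ≤ d k * 1 :=
        mul_le_mul_of_nonneg_left (pow_le_one₀ hx0 hx1) (hdnn k)
    _ = d k := mul_one _

lemma gf_contOn (hdnn : ∀ k, 0 ≤ d k) (hdsum : Summable d) :
    ContinuousOn (genFun d) (Set.Icc 0 1) := by
  refine continuousOn_tsum (fun k => (continuous_const.mul (continuous_pow k)).continuousOn)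
    hdsum ?_
  intro n x hx
  rw [Real.norm_eq_abs, abs_mul, abs_of_nonneg (hdnn n), abs_pow]
  calc d n * |x| ^ n ≤ d n * 1 :=
        mul_le_mul_of_nonneg_left (pow_le_one₀ (abs_nonneg x) (abs_le.mpr ⟨by linarith [hx.1], hx.2⟩)) (hdnn n)
    _ = d n := mul_one _

lemma gf_lt (hdnn : ∀ k, 0 ≤ d k) (hdsum : Summable d)
    (hconv : ∃ k : ℕ, 2 ≤ k ∧ 0 < d k) {x y : ℝ}
    (hx : 0 ≤ x) (hxy : x < y) (hy : y ≤ 1) : genFun d x < genFun d y := by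
  obtain ⟨k, hk2, hkpos⟩ := hconv
  refine Summable.tsum_lt_tsum (i := k) ?_ ?_
    (gf_summable d hdnn hdsum hx (by linarith)) (gf_summable d hdnn hdsum (by linarith) hy)
  · intro j
    exact mul_le_mul_of_nonneg_left (pow_le_pow_left₀ hx hxy.le j) (hdnn j)
  · exact mul_lt_mul_of_pos_left (pow_lt_pow_left₀ hxy hx (by omega)) hkpos

lemma gf_zero (hd0 : d 0 = 0) : genFun d 0 = 0 := by
  rw [genFun, tsum_eq_single 0 (fun b hb => by simp [zero_pow hb])]
  simp [hd0]

lemma gf_convexOn (hdnn : ∀ k, 0 ≤ d k) (hdsum : Summable d) :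
    ConvexOn ℝ (Set.Icc 0 1) (genFun d) := by
  refine ⟨convex_Icc 0 1, ?_⟩
  intro x hx y hy a b ha hb hab
  simp only [smul_eq_mul]
  have hsx := gf_summable d hdnn hdsum hx.1 hx.2
  have hsy := gf_summable d hdnn hdsum hy.1 hy.2
  have hmem0 : 0 ≤ a * x + b * y := by
    have := mul_nonneg ha hx.1; have := mul_nonneg hb hy.1; linarith
  have hmem1 : a * x + b * y ≤ 1 := by
    have h1 : a * x ≤ a * 1 := mul_le_mul_of_nonneg_left hx.2 ha
    have h2 : b * y ≤ b * 1 := mul_le_mul_of_nonneg_left hy.2 hb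
    linarith
  have hs := gf_summable d hdnn hdsum hmem0 hmem1
  calc genFun d (a * x + b * y)
      ≤ ∑' k, (a * (d k * x ^ k) + b * (d k * y ^ k)) := by
        refine Summable.tsum_le_tsum ?_ hs ((hsx.mul_left a).add (hsy.mul_left b))
        intro k
        have hck := (convexOn_pow (𝕜 := ℝ) k).2 (Set.mem_Ici.mpr hx.1) (Set.mem_Ici.mpr hy.1) ha hb hab
        simp only [smul_eq_mul] at hck
        calc d k * (a * x + b * y) ^ k ≤ d k * (a * x ^ k + b * y ^ k) :=
              mul_le_mul_of_nonneg_left hck (hdnn k)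
          _ = a * (d k * x ^ k) + b * (d k * y ^ k) := by ring
    _ = a * genFun d x + b * genFun d y := by
        rw [Summable.tsum_add (hsx.mul_left a) (hsy.mul_left b), tsum_mul_left, tsum_mul_left]
        rfl

lemma gf_lt_self (hd0 : d 0 = 0) (hdnn : ∀ k, 0 ≤ d k) (hdsum : Summable d)
    (hdle : ∑' k, d k ≤ 1) (hconv : ∃ k : ℕ, 2 ≤ k ∧ 0 < d k) {x : ℝ}
    (hx0 : 0 < x) (hx1 : x < 1) : genFun d x < x := by
  obtain ⟨k, hk2, hkpos⟩ := hconv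
  have h1 : genFun d x < ∑' j, d j * x := by
    refine Summable.tsum_lt_tsum (i := k) ?_ ?_
      (gf_summable d hdnn hdsum hx0.le hx1.le) (hdsum.mul_right x)
    · intro j
      rcases Nat.eq_zero_or_pos j with hj | hj
      · simp [hj, hd0]
      · refine mul_le_mul_of_nonneg_left ?_ (hdnn j)
        simpa using pow_le_pow_of_le_one hx0.le hx1.le hj
    · refine mul_lt_mul_of_pos_left ?_ hkpos
      simpa using pow_lt_pow_right_of_lt_one₀ hx0 hx1 (by omega : 1 < k)
  calc genFun d x < ∑' j, d j * x := h1
    _ = (∑' j, d j) * x := tsum_mul_right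
    _ ≤ 1 * x := mul_le_mul_of_nonneg_right hdle hx0.le
    _ = x := one_mul x

lemma deriv_summable (hdnn : ∀ k, 0 ≤ d k) (hdsum : Summable d) (hdle : ∑' k, d k ≤ 1)
    {x : ℝ} (hx0 : 0 ≤ x) (hx1 : x < 1) :
    Summable (fun k : ℕ => ((k : ℝ) + 1) * d (k + 1) * x ^ k) := by
  have hb : Summable (fun k : ℕ => ((k : ℝ) + 1) * x ^ k) := by
    have h1 := summable_pow_mul_geometric_of_norm_lt_one (R := ℝ) 1
      (r := x) (by rwa [Real.norm_eq_abs, abs_of_nonneg hx0])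
    have h2 : Summable (fun k : ℕ => x ^ k) :=
      summable_geometric_of_lt_one hx0 hx1
    simpa [pow_one, add_mul] using h1.add h2
  refine Summable.of_nonneg_of_le ?_ ?_ hb
  · intro k
    exact mul_nonneg (mul_nonneg (by positivity) (hdnn _)) (pow_nonneg hx0 _)
  · intro k
    have hdk : d (k + 1) ≤ 1 := le_trans (Summable.le_tsum hdsum (k + 1) (fun j _ => hdnn j)) hdle
    calc ((k : ℝ) + 1) * d (k + 1) * x ^ k ≤ (((k : ℝ) + 1) * 1) * x ^ k := by
          refine mul_le_mul_of_nonneg_right ?_ (pow_nonneg hx0 _)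
          exact mul_le_mul_of_nonneg_left hdk (by positivity)
      _ = ((k : ℝ) + 1) * x ^ k := by ring

lemma gf_tangent (hd0 : d 0 = 0) (hdnn : ∀ k, 0 ≤ d k) (hdsum : Summable d)
    (hdle : ∑' k, d k ≤ 1) {a x : ℝ} (ha0 : 0 < a) (ha1 : a < 1)
    (hx0 : 0 ≤ x) (hx1 : x ≤ 1) :
    genFun d a + genFunDeriv d a * (x - a) ≤ genFun d x := by
  have hsx := gf_summable d hdnn hdsum hx0 hx1
  have hsa := gf_summable d hdnn hdsum ha0.le ha1.le
  have hsd := deriv_summable d hdnn hdsum hdle ha0.le ha1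
  have hshift_x : genFun d x = ∑' k : ℕ, d (k + 1) * x ^ (k + 1) := by
    rw [genFun, Summable.tsum_eq_zero_add hsx, hd0]; simp
  have hshift_a : genFun d a = ∑' k : ℕ, d (k + 1) * a ^ (k + 1) := by
    rw [genFun, Summable.tsum_eq_zero_add hsa, hd0]; simp
  have hsa' : Summable (fun k : ℕ => d (k + 1) * a ^ (k + 1)) :=
    (summable_nat_add_iff (f := fun k => d k * a ^ k) 1).mpr hsa
  have hsx' : Summable (fun k : ℕ => d (k + 1) * x ^ (k + 1)) :=
    (summable_nat_add_iff (f := fun k => d k * x ^ k) 1).mpr hsx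
  have hterm : ∀ k : ℕ,
      d (k + 1) * a ^ (k + 1) + ((k : ℝ) + 1) * d (k + 1) * a ^ k * (x - a)
        ≤ d (k + 1) * x ^ (k + 1) := by
    intro k
    have key : a ^ (k + 1) + ((k : ℝ) + 1) * a ^ k * (x - a) ≤ x ^ (k + 1) := by
      have hr : (-2 : ℝ) ≤ (x - a) / a := by
        have h1 : (-1 : ℝ) ≤ (x - a) / a := by
          rw [neg_le, ← neg_div, div_le_one ha0]
          linarith
        linarith
      have hB := one_add_mul_le_pow hr (k + 1)
      have h1a : 1 + (x - a) / a = x / a := by field_simp; ring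
      rw [h1a] at hB
      have hapow : (0 : ℝ) < a ^ (k + 1) := pow_pos ha0 _
      have hmul := mul_le_mul_of_nonneg_right hB hapow.le
      rw [div_pow, div_mul_cancel₀ _ hapow.ne'] at hmul
      have hL : (1 + (↑(k + 1) : ℝ) * ((x - a) / a)) * a ^ (k + 1)
          = a ^ (k + 1) + ((k : ℝ) + 1) * a ^ k * (x - a) := by
        push_cast
        field_simp
        ring
      rw [hL] at hmul
      exact hmul
    calc d (k + 1) * a ^ (k + 1) + ((k : ℝ) + 1) * d (k + 1) * a ^ k * (x - a)
        = d (k + 1) * (a ^ (k + 1) + ((k : ℝ) + 1) * a ^ k * (x - a)) := by ring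
      _ ≤ d (k + 1) * x ^ (k + 1) := mul_le_mul_of_nonneg_left key (hdnn _)
  have hsum := Summable.tsum_le_tsum hterm (hsa'.add (hsd.mul_right (x - a))) hsx'
  rw [Summable.tsum_add hsa' (hsd.mul_right (x - a)), tsum_mul_right] at hsum
  rw [hshift_x, hshift_a, genFunDeriv]
  exact hsum

end helpers

/-- in the stable case `H'(μ¹) ≤ 1`, with `μ*` the unique minimizer of
`x ↦ H(x) - x` on `[0,1]`, there is `ε₀ > 0` such that for all `ε ∈ (0, ε₀)` the map
`f_ε(x) = 1 - 2H(μ¹ + ε) + H(x)` has exactly one fixed point `μ¹(ε)` in `[0, μ*)`, and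
`μ¹(ε) → μ¹` as `ε → 0⁺`. -/
theorem perturbed_fixed_point (d : ℕ → ℝ) (hd0 : d 0 = 0) (hdnn : ∀ k, 0 ≤ d k)
    (hdsum : Summable d) (hdle : ∑' k, d k ≤ 1)
    (hconv : ∃ k : ℕ, 2 ≤ k ∧ 0 < d k)
    (μ1 : ℝ) (hμ1 : μ1 ∈ Set.Ioo (0 : ℝ) 1) (hroot : genFun d μ1 + μ1 = 1)
    (hstable : genFunDeriv d μ1 ≤ 1)
    (μs : ℝ) (hμs : μs ∈ Set.Icc (0 : ℝ) 1)
    (hmin : ∀ x ∈ Set.Icc (0 : ℝ) 1, x ≠ μs → genFun d μs - μs < genFun d x - x) :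
    ∃ ε₀ > (0 : ℝ), ∃ g : ℝ → ℝ,
      (∀ ε : ℝ, 0 < ε → ε < ε₀ →
        μ1 + ε ≤ 1 ∧ g ε ∈ Set.Ico (0 : ℝ) μs ∧
        1 - 2 * genFun d (μ1 + ε) + genFun d (g ε) = g ε ∧
        (∀ y ∈ Set.Ico (0 : ℝ) μs, 1 - 2 * genFun d (μ1 + ε) + genFun d y = y → y = g ε)) ∧
      Tendsto g (nhdsWithin 0 (Set.Ioi 0)) (nhds μ1) := by
  classical
  obtain ⟨hμ1p, hμ1lt1⟩ := hμ1
  have hH0 : genFun d 0 = 0 := gf_zero d hd0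
  have hHμ1_lt : genFun d μ1 < μ1 := gf_lt_self d hd0 hdnn hdsum hdle hconv hμ1p hμ1lt1
  have hGconv : ConvexOn ℝ (Set.Icc 0 1) (fun x => genFun d x - x) :=
    (gf_convexOn d hdnn hdsum).sub (concaveOn_id (convex_Icc 0 1))
  have hμ1μs : μ1 ≤ μs := by
    by_contra hlt
    push_neg at hlt
    have htan := gf_tangent d hd0 hdnn hdsum hdle hμ1p hμ1lt1 hμs.1 hμs.2
    have hmin1 := hmin μ1 ⟨hμ1p.le, hμ1lt1.le⟩ (ne_of_gt hlt)
    nlinarith [mul_nonneg (sub_nonneg.mpr hstable) (sub_nonneg.mpr hlt.le)]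
  have hdec : ∀ a b : ℝ, 0 ≤ a → a < b → b ≤ μs →
      genFun d b - b < genFun d a - a := by
    intro a b ha0 hab hbs
    have ha1 : a ≤ 1 := le_trans (le_trans hab.le hbs) hμs.2
    have hane : a ≠ μs := ne_of_lt (lt_of_lt_of_le hab hbs)
    have hGa := hmin a ⟨ha0, ha1⟩ hane
    rcases eq_or_lt_of_le hbs with rfl | hbμs
    · exact hGa
    · have hden : 0 < μs - a := by linarith
      set t : ℝ := (μs - b) / (μs - a) with htdef
      set s : ℝ := (b - a) / (μs - a) with hsdef
      have ht : 0 < t := div_pos (by linarith) hden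
      have hs : 0 < s := div_pos (by linarith) hden
      have hts : t + s = 1 := by rw [htdef, hsdef]; field_simp; ring
      have hcomb : t * a + s * μs = b := by rw [htdef, hsdef]; field_simp; ring
      have hcx := hGconv.2 (⟨ha0, ha1⟩ : a ∈ Set.Icc (0:ℝ) 1) hμs ht.le hs.le hts
      simp only [smul_eq_mul] at hcx
      rw [hcomb] at hcx
      have ht' : t = 1 - s := by linarith
      rw [ht'] at hcx
      nlinarith [mul_pos hs (sub_pos.mpr hGa)]
  have hdec' : ∀ a b : ℝ, 0 ≤ a → a ≤ b → b ≤ μs →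
      genFun d b - b ≤ genFun d a - a := by
    intro a b ha0 hab hbs
    rcases eq_or_lt_of_le hab with rfl | h
    · exact le_rfl
    · exact (hdec a b ha0 h hbs).le
  have hca : ContinuousAt (genFun d) μ1 :=
    (gf_contOn d hdnn hdsum).continuousAt (Icc_mem_nhds hμ1p hμ1lt1)
  have h2H : 2 * genFun d μ1 < 1 := by linarith
  have hev : ∀ᶠ y in 𝓝 μ1, genFun d y < 1/2 :=
    hca.eventually_lt_const (by linarith)
  obtain ⟨δ1, hδ1pos, hδ1⟩ := Metric.eventually_nhds_iff.mp hev
  set ε₀ := min δ1 (1 - μ1) with hε₀def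
  have hε₀pos : 0 < ε₀ := lt_min hδ1pos (by linarith)
  have key : ∀ ε : ℝ, 0 < ε → ε < ε₀ →
      ∃ x, x ∈ Set.Ioo 0 μ1 ∧ genFun d x - x = 2 * genFun d (μ1 + ε) - 1 := by
    intro ε hε hεlt
    have hεle : μ1 + ε ≤ 1 := by
      have := lt_of_lt_of_le hεlt (min_le_right δ1 (1 - μ1)); linarith
    have hH2 : genFun d (μ1 + ε) < 1/2 := by
      apply hδ1
      rw [Real.dist_eq, show μ1 + ε - μ1 = ε by ring, abs_of_pos hε]
      exact lt_of_lt_of_le hεlt (min_le_left _ _)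
    have hmono : genFun d μ1 < genFun d (μ1 + ε) :=
      gf_lt d hdnn hdsum hconv hμ1p.le (by linarith) hεle
    have hcont : ContinuousOn (fun x => genFun d x - x) (Set.Icc 0 μ1) :=
      ((gf_contOn d hdnn hdsum).mono (Set.Icc_subset_Icc le_rfl hμ1lt1.le)).sub continuousOn_id
    have hc_mem : (2 * genFun d (μ1 + ε) - 1) ∈
        Set.Ioo ((fun x => genFun d x - x) μ1) ((fun x => genFun d x - x) 0) := by
      constructor
      · simp only; linarith
      · simp only [hH0]; linarith
    obtain ⟨x, hx, hfx⟩ := intermediate_value_Ioo' hμ1p.le hcont hc_mem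
    exact ⟨x, hx, hfx⟩
  refine ⟨ε₀, hε₀pos,
    fun ε => if h : 0 < ε ∧ ε < ε₀ then (key ε h.1 h.2).choose else μ1, ?_, ?_⟩
  · intro ε hε hεlt
    have hd' : 0 < ε ∧ ε < ε₀ := ⟨hε, hεlt⟩
    simp only [dif_pos hd']
    obtain ⟨hxmem, hxeq⟩ := (key ε hd'.1 hd'.2).choose_spec
    set x := (key ε hd'.1 hd'.2).choose with hxdef
    have hεle : μ1 + ε ≤ 1 := by
      have := lt_of_lt_of_le hεlt (min_le_right δ1 (1 - μ1)); linarith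
    have hxμs : x < μs := lt_of_lt_of_le hxmem.2 hμ1μs
    refine ⟨hεle, ⟨hxmem.1.le, hxμs⟩, by linarith, ?_⟩
    intro y hy hyeq
    have hGy : genFun d y - y = genFun d x - x := by linarith
    rcases lt_trichotomy y x with h | h | h
    · have := hdec y x hy.1 h hxμs.le
      linarith
    · exact h
    · have := hdec x y hxmem.1.le h hy.2.le
      linarith
  · rw [Metric.tendsto_nhdsWithin_nhds]
    intro δ hδ
    set δ' := min (δ/2) (μ1/2) with hδ'def
    have hδ'pos : 0 < δ' := lt_min (by linarith) (by linarith)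
    have hδ'le : δ' ≤ μ1/2 := min_le_right _ _
    have hGd : genFun d μ1 - μ1 < genFun d (μ1 - δ') - (μ1 - δ') :=
      hdec (μ1 - δ') μ1 (by linarith) (by linarith) hμ1μs
    set ρ := (genFun d (μ1 - δ') - (μ1 - δ')) - (genFun d μ1 - μ1) with hρdef
    have hρpos : 0 < ρ := by linarith
    have hev2 : ∀ᶠ y in 𝓝 μ1, genFun d y < genFun d μ1 + ρ/2 :=
      hca.eventually_lt_const (by linarith)
    obtain ⟨η, hηpos, hη⟩ := Metric.eventually_nhds_iff.mp hev2
    refine ⟨min η ε₀, lt_min hηpos hε₀pos, ?_⟩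
    intro ε hεmem hεdist
    have hε : 0 < ε := hεmem
    have habs : |ε| < min η ε₀ := by simpa [Real.dist_eq] using hεdist
    have hεη : ε < η := lt_of_abs_lt (lt_of_lt_of_le habs (min_le_left _ _))
    have hεlt : ε < ε₀ := lt_of_abs_lt (lt_of_lt_of_le habs (min_le_right _ _))
    have hd' : 0 < ε ∧ ε < ε₀ := ⟨hε, hεlt⟩
    simp only [dif_pos hd']
    obtain ⟨hxmem, hxeq⟩ := (key ε hd'.1 hd'.2).choose_spec
    set x := (key ε hd'.1 hd'.2).choose with hxdef
    have hH2 : genFun d (μ1 + ε) < genFun d μ1 + ρ/2 := by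
      apply hη
      rw [Real.dist_eq, show μ1 + ε - μ1 = ε by ring, abs_of_pos hε]
      exact hεη
    have hc : genFun d x - x < genFun d (μ1 - δ') - (μ1 - δ') := by
      linarith
    have hxgt : μ1 - δ' < x := by
      by_contra hle
      push_neg at hle
      rcases eq_or_lt_of_le hle with heq | hlt2
      · rw [heq] at hc; linarith
      · have := hdec x (μ1 - δ') hxmem.1.le hlt2 (by linarith)
        linarith
    have hδ'le2 : δ' ≤ δ/2 := min_le_left _ _
    rw [Real.dist_eq, abs_of_neg (by linarith [hxmem.2] : x - μ1 < 0)]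
    linarith
end
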